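/- arXiv:1508.03216 — 2 statements merged into one kernel-verified Lean document; each statement's English description precedes it below -/
import Mathlib

section
/- (Proposition 1, maximality, case m = N.) If z, z̄ ∈ ℂ^N and S, S̄ ∈ ℂ^{N×N} are Hermitian positive definite with z₂† S₂₂⁻¹ z₂ = z̄₂† S̄₂₂⁻¹ z̄₂, then there exists (G,f) ∈ 𝓛 such that z = G z̄ + f and S = G S̄ G†. -/
open Matrix ComplexOrder

/-- The set 𝓖 for the case `t + r = N`: block upper-triangular matrices
`G = [[G₁₁, G₁₂], [0, G₂₂]]` with `G₁₁` and `G₂₂` invertible. -/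
def memG (t r : ℕ) (G : Matrix (Fin t ⊕ Fin r) (Fin t ⊕ Fin r) ℂ) : Prop :=
  (∀ i j, G (Sum.inr i) (Sum.inl j) = 0) ∧
  IsUnit (G.submatrix Sum.inl Sum.inl) ∧
  IsUnit (G.submatrix Sum.inr Sum.inr)

/-- The set 𝓕 for the case `t + r = N`: vectors whose last `r` entries are zero. -/
def memF (t r : ℕ) (f : Fin t ⊕ Fin r → ℂ) : Prop :=
  ∀ i, f (Sum.inr i) = 0

/-- Second block (size `r`) of a partitioned vector. -/
def blk2 {t r : ℕ} (z : Fin t ⊕ Fin r → ℂ) : Fin r → ℂ :=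
  fun i => z (Sum.inr i)

/-- The `(2,2)` diagonal block `S₂₂` of a partitioned matrix. -/
def S22 {t r : ℕ} (S : Matrix (Fin t ⊕ Fin r) (Fin t ⊕ Fin r) ℂ) :
    Matrix (Fin r) (Fin r) ℂ :=
  S.submatrix Sum.inr Sum.inr


lemma star_dot_comm {r : ℕ} (x y : Fin r → ℂ) :
    star (star x ⬝ᵥ y) = star y ⬝ᵥ x := by
  simp [dotProduct, star_sum, mul_comm]

lemma exists_unitary {r : ℕ} (a b : Fin r → ℂ)
    (h : star a ⬝ᵥ a = star b ⬝ᵥ b) :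
    ∃ U : Matrix (Fin r) (Fin r) ℂ, U * Uᴴ = 1 ∧ a = U *ᵥ b := by
  set s : ℂ := star a ⬝ᵥ b with hs_def
  set α : ℂ := if s = 0 then 1 else (‖s‖:ℂ)/s with hα_def
  have hαs : α * s = (‖s‖:ℂ) := by
    by_cases hs : s = 0
    · simp [hα_def, hs]
    · rw [hα_def, if_neg hs]; field_simp
  have hαα : α * star α = 1 := by
    by_cases hs : s = 0
    · simp [hα_def, hs]
    · have hns : (‖s‖:ℂ) ≠ 0 := by simpa using norm_ne_zero_iff.mpr hs
      have h1 : s * star s = (‖s‖:ℂ)^2 := by simpa using Complex.mul_conj' s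
      have h2 : star ((‖s‖:ℂ)) = (‖s‖:ℂ) := by simp [Complex.conj_ofReal]
      rw [hα_def, if_neg hs, star_div₀, div_mul_div_comm, h1, h2, ← sq,
        div_self (pow_ne_zero 2 hns)]
  set c : ℂ := star a ⬝ᵥ a with hc_def
  set b' : Fin r → ℂ := α • b with hb'_def
  have hb'b' : star b' ⬝ᵥ b' = c := by
    rw [hb'_def, star_smul, smul_dotProduct, dotProduct_smul, smul_eq_mul, smul_eq_mul, ← h,
      ← mul_assoc, mul_comm (star α) α, hαα, one_mul]
  have hab' : star a ⬝ᵥ b' = (‖s‖:ℂ) := by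
    rw [hb'_def, dotProduct_smul, smul_eq_mul, ← hs_def, hαs]
  have hb'a : star b' ⬝ᵥ a = (‖s‖:ℂ) := by
    rw [← star_dot_comm, hab']; simp [Complex.conj_ofReal]
  set x : Fin r → ℂ := a - b' with hx_def
  by_cases hx : x = 0
  · refine ⟨α • 1, ?_, ?_⟩
    · rw [conjTranspose_smul, conjTranspose_one, smul_mul, Matrix.mul_smul, smul_smul, one_mul,
        hαα, one_smul]
    · have hab : a = b' := by rwa [hx_def, sub_eq_zero] at hx
      rw [smul_mulVec, one_mulVec, ← hb'_def, hab]
  · set n₀ : ℂ := star x ⬝ᵥ x with hn₀_def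
    have hn₀ : n₀ ≠ 0 := fun h0 => hx (dotProduct_star_self_eq_zero.mp h0)
    have hn₀star : star n₀ = n₀ := by rw [hn₀_def, star_dot_comm]
    have hxb' : star x ⬝ᵥ b' = (‖s‖:ℂ) - c := by
      rw [hx_def, star_sub, sub_dotProduct, hab', hb'b']
    have hn₀' : n₀ = 2*c - 2*(‖s‖:ℂ) := by
      rw [hn₀_def, hx_def, star_sub, sub_dotProduct, dotProduct_sub, dotProduct_sub,
        ← hc_def, hab', hb'a, hb'b']
      ring
    set P : Matrix (Fin r) (Fin r) ℂ := vecMulVec x (star x) with hP_def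
    have hPv : ∀ v : Fin r → ℂ, P *ᵥ v = (star x ⬝ᵥ v) • x := by
      intro v; funext i
      simp only [hP_def, mulVec, vecMulVec_apply, dotProduct, Pi.smul_apply, smul_eq_mul,
        Pi.star_apply]
      rw [Finset.sum_mul]
      apply Finset.sum_congr rfl
      intro k _
      ring
    have hPP : P * P = n₀ • P := by
      ext i j
      simp only [hP_def, mul_apply, vecMulVec_apply, Matrix.smul_apply, smul_eq_mul, hn₀_def, dotProduct,
        Pi.star_apply]
      rw [Finset.sum_mul]
      apply Finset.sum_congr rfl
      intro k _
      ring
    have hPH : Pᴴ = P := by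
      ext i j
      simp [hP_def, conjTranspose_apply, vecMulVec_apply, mul_comm]
    set R : Matrix (Fin r) (Fin r) ℂ := 1 - (2/n₀) • P with hR_def
    have hRH : Rᴴ = R := by
      rw [hR_def, conjTranspose_sub, conjTranspose_one, conjTranspose_smul, hPH]
      congr 1
      rw [star_div₀, hn₀star]
      norm_num
    have hRR : R * R = 1 := by
      have hk : (2/n₀) * ((2/n₀) * n₀) = (2/n₀) + (2/n₀) := by field_simp; ring
      simp only [hR_def, mul_sub, sub_mul, Matrix.one_mul, Matrix.mul_one, Matrix.smul_mul,
        Matrix.mul_smul, hPP, smul_smul]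
      rw [hk, add_smul]
      abel
    have hRb' : R *ᵥ b' = a := by
      have hcoef : (2/n₀) * ((‖s‖:ℂ) - c) = -1 := by
        have hd : (2*c - 2*(‖s‖:ℂ)) ≠ 0 := hn₀' ▸ hn₀
        rw [hn₀', div_mul_eq_mul_div, div_eq_iff hd]
        ring
      rw [hR_def, sub_mulVec, one_mulVec, smul_mulVec, hPv, hxb', smul_smul, hcoef,
        neg_one_smul, sub_neg_eq_add, hx_def]
      abel
    refine ⟨α • R, ?_, ?_⟩
    · rw [conjTranspose_smul, hRH, smul_mul, Matrix.mul_smul, smul_smul, hRR, hαα, one_smul]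
    · rw [smul_mulVec, ← mulVec_smul, ← hb'_def, hRb']
open scoped MatrixOrder in
lemma sqrt_facts {r : ℕ} {P : Matrix (Fin r) (Fin r) ℂ} (hP : P.PosDef) :
    ∃ A : Matrix (Fin r) (Fin r) ℂ, A * A = P ∧ Aᴴ = A ∧ IsUnit A := by
  refine ⟨CFC.sqrt P, CFC.sqrt_mul_sqrt_self P hP.posSemidef.nonneg,
    (CFC.sqrt_nonneg P).posSemidef.isHermitian, ?_⟩
  rw [isUnit_iff_isUnit_det]
  have hdet : (CFC.sqrt P).det * (CFC.sqrt P).det = P.det := by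
    rw [← det_mul, CFC.sqrt_mul_sqrt_self P hP.posSemidef.nonneg]
  have : P.det ≠ 0 := hP.det_pos.ne'
  exact isUnit_iff_ne_zero.mpr (fun h0 => this (by rw [← hdet, h0, zero_mul]))

lemma inv_quad {r : ℕ} {A : Matrix (Fin r) (Fin r) ℂ} (hAH : Aᴴ = A) (hA : IsUnit A)
    (u : Fin r → ℂ) :
    star (A⁻¹ *ᵥ u) ⬝ᵥ (A⁻¹ *ᵥ u) = star u ⬝ᵥ ((A * A)⁻¹ *ᵥ u) := by
  rw [star_mulVec, dotProduct_mulVec, vecMul_vecMul, conjTranspose_nonsing_inv, hAH,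
    ← Matrix.mul_inv_rev, ← dotProduct_mulVec]

lemma lemA {r : ℕ} {P Q : Matrix (Fin r) (Fin r) ℂ} (hP : P.PosDef) (hQ : Q.PosDef)
    (u v : Fin r → ℂ) (h : star u ⬝ᵥ (P⁻¹ *ᵥ u) = star v ⬝ᵥ (Q⁻¹ *ᵥ v)) :
    ∃ M : Matrix (Fin r) (Fin r) ℂ, IsUnit M ∧ u = M *ᵥ v ∧ P = M * Q * Mᴴ := by
  obtain ⟨A, hAA, hAH, hA⟩ := sqrt_facts hP
  obtain ⟨B, hBB, hBH, hB⟩ := sqrt_facts hQ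
  obtain ⟨U, hUU, haU⟩ := exists_unitary (A⁻¹ *ᵥ u) (B⁻¹ *ᵥ v) (by
    rw [inv_quad hAH hA, inv_quad hBH hB, hAA, hBB, h])
  have hUn : IsUnit U := by
    rw [isUnit_iff_isUnit_det]
    have : U.det * Uᴴ.det = 1 := by rw [← det_mul, hUU, det_one]
    exact IsUnit.of_mul_eq_one _ this
  have hAd := (isUnit_iff_isUnit_det A).mp hA
  have hBd := (isUnit_iff_isUnit_det B).mp hB
  refine ⟨A * U * B⁻¹, (hA.mul hUn).mul (isUnit_nonsing_inv_iff.mpr hB), ?_, ?_⟩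
  · rw [← Matrix.mulVec_mulVec, ← Matrix.mulVec_mulVec, ← haU, Matrix.mulVec_mulVec,
      Matrix.mul_nonsing_inv _ hAd, one_mulVec]
  · have hBinvH : (B⁻¹)ᴴ = B⁻¹ := by rw [conjTranspose_nonsing_inv, hBH]
    calc P = A * A := hAA.symm
    _ = A * (U * Uᴴ) * A := by rw [hUU, Matrix.mul_one]
    _ = A * U * (B⁻¹ * (B * B) * B⁻¹) * Uᴴ * A := by
        have hBmid : B⁻¹ * (B * B) * B⁻¹ = 1 := by
          rw [← Matrix.mul_assoc, Matrix.nonsing_inv_mul _ hBd, Matrix.one_mul,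
            Matrix.mul_nonsing_inv _ hBd]
        rw [hBmid, Matrix.mul_one]
        noncomm_ring
    _ = (A * U * B⁻¹) * Q * (A * U * B⁻¹)ᴴ := by
        rw [conjTranspose_mul, conjTranspose_mul, hBinvH, hAH, hBB]
        noncomm_ring

section blocks
variable {t r : ℕ}

lemma posdef22 {S : Matrix (Fin t ⊕ Fin r) (Fin t ⊕ Fin r) ℂ} (hS : S.PosDef) :
    (S.toBlocks₂₂).PosDef := by
  refine posDef_iff_dotProduct_mulVec.mpr ⟨?_, ?_⟩
  · ext i j
    exact congrFun (congrFun hS.1 (Sum.inr i)) (Sum.inr j)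
  · intro x hx
    have hy : (Sum.elim 0 x : Fin t ⊕ Fin r → ℂ) ≠ 0 := by
      intro h0
      apply hx
      funext i
      exact congrFun h0 (Sum.inr i)
    have := hS.dotProduct_mulVec_pos hy
    convert this using 2
    simp [dotProduct, Fintype.sum_sum_type, mulVec, toBlocks₂₂]

lemma schurPosDef {A : Matrix (Fin t) (Fin t) ℂ} {B : Matrix (Fin t) (Fin r) ℂ}
    {D : Matrix (Fin r) (Fin r) ℂ} (h : (fromBlocks A B Bᴴ D).PosDef) (hD : D.PosDef) :
    (A - B * D⁻¹ * Bᴴ).PosDef := by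
  have := hD.isUnit.invertible
  refine posDef_iff_dotProduct_mulVec.mpr ⟨?_, ?_⟩
  · have hDinvH : (D⁻¹)ᴴ = D⁻¹ := by rw [conjTranspose_nonsing_inv, hD.1]
    have hAH : Aᴴ = A := by
      ext i j
      exact congrFun (congrFun h.1 (Sum.inl i)) (Sum.inl j)
    rw [IsHermitian, conjTranspose_sub, hAH, conjTranspose_mul, conjTranspose_mul,
      conjTranspose_conjTranspose, hDinvH, Matrix.mul_assoc]
  · intro x hx
    have hy : (x ⊕ᵥ (-((D⁻¹ * Bᴴ) *ᵥ x)) : Fin t ⊕ Fin r → ℂ) ≠ 0 := by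
      intro h0
      apply hx
      funext i
      exact congrFun h0 (Sum.inl i)
    have hpos := h.dotProduct_mulVec_pos hy
    have key := schur_complement_eq₂₂ A B x (-((D⁻¹ * Bᴴ) *ᵥ x)) (hD := hD.1)
    rw [add_neg_cancel] at key
    simp only [star_zero, zero_vecMul, zero_dotProduct, zero_add] at key
    rw [dotProduct_mulVec] at hpos ⊢
    rw [key] at hpos
    exact hpos

lemma ldl {A : Matrix (Fin t) (Fin t) ℂ} {B : Matrix (Fin t) (Fin r) ℂ}
    {D : Matrix (Fin r) (Fin r) ℂ} (hDH : Dᴴ = D) (hD : IsUnit D.det) :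
    fromBlocks A B Bᴴ D =
      fromBlocks 1 (B * D⁻¹) 0 1 * fromBlocks (A - B * D⁻¹ * Bᴴ) 0 0 D *
        (fromBlocks 1 (B * D⁻¹) 0 1)ᴴ := by
  have hDinvH : (D⁻¹)ᴴ = D⁻¹ := by rw [conjTranspose_nonsing_inv, hDH]
  rw [fromBlocks_conjTranspose, fromBlocks_multiply, fromBlocks_multiply]
  simp only [Matrix.one_mul, Matrix.mul_one, Matrix.mul_zero, Matrix.zero_mul, add_zero, zero_add,
    conjTranspose_one, conjTranspose_zero, conjTranspose_mul, hDinvH]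
  have h1 : B * D⁻¹ * D = B := by
    rw [Matrix.mul_assoc, Matrix.nonsing_inv_mul _ hD, Matrix.mul_one]
  have h2 : D * (D⁻¹ * Bᴴ) = Bᴴ := by
    rw [← Matrix.mul_assoc, Matrix.mul_nonsing_inv _ hD, Matrix.one_mul]
  rw [h1, h2, Matrix.mul_assoc B D⁻¹ Bᴴ, sub_add_cancel]

end blocks

/-- Proposition 1 (maximality, case `m = N`): if `z₂† S₂₂⁻¹ z₂ = z̄₂† S̄₂₂⁻¹ z̄₂` for
Hermitian positive definite `S`, `S̄`, then there is `(G,f) ∈ 𝓛` with `z = G z̄ + f` and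
`S = G S̄ Gᴴ`. -/
theorem stmt5 (t r : ℕ) (ht : 1 ≤ t) (hr : 1 ≤ r)
    (z zb : Fin t ⊕ Fin r → ℂ)
    (S Sb : Matrix (Fin t ⊕ Fin r) (Fin t ⊕ Fin r) ℂ)
    (hS : S.PosDef) (hSb : Sb.PosDef)
    (heq : star (blk2 z) ⬝ᵥ ((S22 S)⁻¹ *ᵥ blk2 z) =
      star (blk2 zb) ⬝ᵥ ((S22 Sb)⁻¹ *ᵥ blk2 zb)) :
    ∃ G : Matrix (Fin t ⊕ Fin r) (Fin t ⊕ Fin r) ℂ, ∃ f : Fin t ⊕ Fin r → ℂ,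
      memG t r G ∧ memF t r f ∧ z = G *ᵥ zb + f ∧ S = G * Sb * Gᴴ := by
  classical
  obtain ⟨A, B, D, hA_def, hB_def, hD_def⟩ :
      ∃ A B D, A = S.toBlocks₁₁ ∧ B = S.toBlocks₁₂ ∧ D = S.toBlocks₂₂ := ⟨_, _, _, rfl, rfl, rfl⟩
  obtain ⟨Ab, Bb, Db, hAb_def, hBb_def, hDb_def⟩ :
      ∃ A B D, A = Sb.toBlocks₁₁ ∧ B = Sb.toBlocks₁₂ ∧ D = Sb.toBlocks₂₂ :=
    ⟨_, _, _, rfl, rfl, rfl⟩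
  have hSf : S = fromBlocks A B Bᴴ D := by
    have h21 : S.toBlocks₂₁ = (S.toBlocks₁₂)ᴴ := by
      ext i j
      have := congrFun (congrFun hS.1 (Sum.inr i)) (Sum.inl j)
      simp only [conjTranspose_apply] at this
      simp [toBlocks₂₁, toBlocks₁₂, conjTranspose_apply, ← this]
    rw [hA_def, hB_def, hD_def, ← h21, fromBlocks_toBlocks]
  have hSbf : Sb = fromBlocks Ab Bb Bbᴴ Db := by
    have h21 : Sb.toBlocks₂₁ = (Sb.toBlocks₁₂)ᴴ := by
      ext i j
      have := congrFun (congrFun hSb.1 (Sum.inr i)) (Sum.inl j)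
      simp only [conjTranspose_apply] at this
      simp [toBlocks₂₁, toBlocks₁₂, conjTranspose_apply, ← this]
    rw [hAb_def, hBb_def, hDb_def, ← h21, fromBlocks_toBlocks]
  have hD : D.PosDef := hD_def ▸ posdef22 hS
  have hDb : Db.PosDef := hDb_def ▸ posdef22 hSb
  have hSfB : (fromBlocks A B Bᴴ D).PosDef := hSf ▸ hS
  have hSbfB : (fromBlocks Ab Bb Bbᴴ Db).PosDef := hSbf ▸ hSb
  have hΔ : (A - B * D⁻¹ * Bᴴ).PosDef := schurPosDef hSfB hD
  have hΔb : (Ab - Bb * Db⁻¹ * Bbᴴ).PosDef := schurPosDef hSbfB hDb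
  have hS22 : S22 S = D := hD_def.symm ▸ rfl
  have hS22b : S22 Sb = Db := hDb_def.symm ▸ rfl
  obtain ⟨M, hMu, hMz, hMS⟩ := lemA hD hDb (blk2 z) (blk2 zb) (by rw [← hS22, ← hS22b]; exact heq)
  obtain ⟨M', hM'u, -, hM'S⟩ := lemA hΔ hΔb 0 0 (by simp)
  obtain ⟨L, hL⟩ : ∃ L : Matrix (Fin t ⊕ Fin r) (Fin t ⊕ Fin r) ℂ, L = fromBlocks (1 : Matrix (Fin t) (Fin t) ℂ) (B * D⁻¹) 0 1 :=
    ⟨fromBlocks 1 (B * D⁻¹) 0 1, rfl⟩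
  obtain ⟨Lb, hLb⟩ : ∃ L : Matrix (Fin t ⊕ Fin r) (Fin t ⊕ Fin r) ℂ, L = fromBlocks (1 : Matrix (Fin t) (Fin t) ℂ) (Bb * Db⁻¹) 0 1 :=
    ⟨fromBlocks 1 (Bb * Db⁻¹) 0 1, rfl⟩
  obtain ⟨Li, hLi⟩ : ∃ L : Matrix (Fin t ⊕ Fin r) (Fin t ⊕ Fin r) ℂ, L = fromBlocks (1 : Matrix (Fin t) (Fin t) ℂ) (-(Bb * Db⁻¹)) 0 1 :=
    ⟨fromBlocks 1 (-(Bb * Db⁻¹)) 0 1, rfl⟩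
  obtain ⟨K, hK⟩ : ∃ K : Matrix (Fin t ⊕ Fin r) (Fin t ⊕ Fin r) ℂ, K = fromBlocks M' 0 0 M := ⟨fromBlocks M' 0 0 M, rfl⟩
  have hGf : L * K * Li = fromBlocks M' (M' * -(Bb * Db⁻¹) + B * D⁻¹ * M) 0 M := by
    rw [hL, hK, hLi, fromBlocks_multiply, fromBlocks_multiply]
    simp only [Matrix.mul_one, Matrix.one_mul, Matrix.mul_zero, Matrix.zero_mul, add_zero,
      zero_add]
  refine ⟨L * K * Li, z - (L * K * Li) *ᵥ zb, ⟨?_, ?_, ?_⟩, ?_, ?_, ?_⟩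
  · intro i j
    rw [hGf]
    simp [fromBlocks_apply₂₁]
  · have hsub : (L * K * Li).submatrix Sum.inl Sum.inl = M' := by
      ext i j
      rw [hGf]
      simp [fromBlocks_apply₁₁]
    rw [hsub]; exact hM'u
  · have hsub : (L * K * Li).submatrix Sum.inr Sum.inr = M := by
      ext i j
      rw [hGf]
      simp [fromBlocks_apply₂₂]
    rw [hsub]; exact hMu
  · intro i
    have hzb : zb = (fun i => zb (Sum.inl i)) ⊕ᵥ blk2 zb := (Sum.elim_comp_inl_inr zb).symm
    have h1 : ((L * K * Li) *ᵥ zb) (Sum.inr i) = (M *ᵥ blk2 zb) i := by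
      conv_lhs => rw [hGf, hzb, fromBlocks_mulVec]
      simp
    have h2 : z (Sum.inr i) = (M *ᵥ blk2 zb) i := congrFun hMz i
    simp [Pi.sub_apply, h1, h2]
  · funext i
    simp
  · -- S = G Sb Gᴴ
    have hDdet : IsUnit D.det := (isUnit_iff_isUnit_det D).mp hD.isUnit
    have hDbdet : IsUnit Db.det := (isUnit_iff_isUnit_det Db).mp hDb.isUnit
    have hSfac : S = L * fromBlocks (A - B * D⁻¹ * Bᴴ) 0 0 D * Lᴴ := by
      rw [hSf, hL]; exact ldl hD.1 hDdet
    have hSbfac : Sb = Lb * fromBlocks (Ab - Bb * Db⁻¹ * Bbᴴ) 0 0 Db * Lbᴴ := by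
      rw [hSbf, hLb]; exact ldl hDb.1 hDbdet
    have h1 : Li * Lb = 1 := by
      rw [hLi, hLb, fromBlocks_multiply]
      simp [← fromBlocks_one]
    have h2 : Lbᴴ * Liᴴ = 1 := by rw [← conjTranspose_mul, h1, conjTranspose_one]
    have hKΔ : K * fromBlocks (Ab - Bb * Db⁻¹ * Bbᴴ) 0 0 Db * Kᴴ = fromBlocks
        (A - B * D⁻¹ * Bᴴ) 0 0 D := by
      rw [hK, fromBlocks_conjTranspose, fromBlocks_multiply, fromBlocks_multiply]
      simp only [Matrix.mul_zero, Matrix.zero_mul, add_zero, zero_add, conjTranspose_zero]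
      rw [← hM'S, ← hMS]
    calc S = L * (K * fromBlocks (Ab - Bb * Db⁻¹ * Bbᴴ) 0 0 Db * Kᴴ) * Lᴴ := by
            rw [hKΔ]; exact hSfac
    _ = L * K * (Li * Lb) * fromBlocks (Ab - Bb * Db⁻¹ * Bbᴴ) 0 0 Db * (Lbᴴ * Liᴴ) * Kᴴ * Lᴴ := by
            rw [h1, h2, Matrix.mul_one]
            noncomm_ring
    _ = (L * K * Li) * Sb * (L * K * Li)ᴴ := by
            rw [hSbfac, conjTranspose_mul, conjTranspose_mul]
            noncomm_ring
end

section
/- (Energy detector identity, case m = N.) Let N ≥ 2, t ≥ 1, r ≥ 1 with t + r = N, let S ∈ ℂ^{N×N} be Hermitian positive definite, and let E_t ∈ ℂ^{N×t} consist of the first t standard basis vectors of ℂ^N. Then for every z ∈ ℂ^N, z† S^{−1/2}(I_N − P_{S^{−1/2}E_t})S^{−1/2} z = z₂† S₂₂⁻¹ z₂, where z₂ ∈ ℂ^r is the vector of the last r entries of z and S₂₂ the trailing r×r principal submatrix of S; hence when m = N the GLRT and the 2S-GLRT statistics both coincide with the energy detector statistic z₂† S₂₂⁻¹ z₂. -/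
open Matrix ComplexOrder

/-- `E_t`: the matrix whose columns are the first `t` standard basis vectors of ℂ^N,
`N = t + r`. -/
def Et (t r : ℕ) : Matrix (Fin t ⊕ Fin r) (Fin t) ℂ :=
  Matrix.of fun i j => if i = Sum.inl j then 1 else 0

/-- The orthogonal projection `P_A = A (A† A)⁻¹ A†` onto the column space of `A`. -/
noncomputable def proj {n : Type*} {k : Type*} [Fintype n] [Fintype k] [DecidableEq n]
    [DecidableEq k] (A : Matrix n k ℂ) : Matrix n n ℂ :=
  A * (Aᴴ * A)⁻¹ * Aᴴ

lemma posDef_blk₁₁ {m n : Type*} [Fintype m] [Fintype n] [DecidableEq m] [DecidableEq n]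
    {M : Matrix (m ⊕ n) (m ⊕ n) ℂ} (h : M.PosDef) : M.toBlocks₁₁.PosDef := by
  refine Matrix.PosDef.of_dotProduct_mulVec_pos ?_ ?_
  · ext i j
    simpa [Matrix.toBlocks₁₁] using h.isHermitian.apply (Sum.inl i) (Sum.inl j)
  · intro x hx
    have hv : (Sum.elim x 0 : m ⊕ n → ℂ) ≠ 0 := by
      intro h0; apply hx; ext i; exact congrFun h0 (Sum.inl i)
    have := h.dotProduct_mulVec_pos hv
    have key : star (Sum.elim x 0) ⬝ᵥ M *ᵥ Sum.elim x 0 = star x ⬝ᵥ M.toBlocks₁₁ *ᵥ x := by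
      simp [Matrix.mulVec, dotProduct, Fintype.sum_sum_type, Matrix.toBlocks₁₁]
    rwa [key] at this

lemma posDef_blk₂₂ {m n : Type*} [Fintype m] [Fintype n] [DecidableEq m] [DecidableEq n]
    {M : Matrix (m ⊕ n) (m ⊕ n) ℂ} (h : M.PosDef) : M.toBlocks₂₂.PosDef := by
  refine Matrix.PosDef.of_dotProduct_mulVec_pos ?_ ?_
  · ext i j
    simpa [Matrix.toBlocks₂₂] using h.isHermitian.apply (Sum.inr i) (Sum.inr j)
  · intro x hx
    have hv : (Sum.elim 0 x : m ⊕ n → ℂ) ≠ 0 := by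
      intro h0; apply hx; ext i; exact congrFun h0 (Sum.inr i)
    have := h.dotProduct_mulVec_pos hv
    have key : star (Sum.elim 0 x) ⬝ᵥ M *ᵥ Sum.elim 0 x = star x ⬝ᵥ M.toBlocks₂₂ *ᵥ x := by
      simp [Matrix.mulVec, dotProduct, Fintype.sum_sum_type, Matrix.toBlocks₂₂]
    rwa [key] at this

/-- Energy detector identity, case `m = N` (`t + r = N`): with `R = S^{-1/2}` the
Hermitian positive definite inverse square root of `S`,
`z† S^{-1/2}(I − P_{S^{-1/2}E_t})S^{-1/2} z = z₂† S₂₂⁻¹ z₂`, where `z₂` is the vector of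
the last `r` entries of `z` and `S₂₂` the trailing `r × r` principal submatrix of `S`;
this common value of the GLRT and 2S-GLRT statistics is the energy detector statistic. -/
theorem stmt10 (t r : ℕ) (ht : 1 ≤ t) (hr : 1 ≤ r)
    (S : Matrix (Fin t ⊕ Fin r) (Fin t ⊕ Fin r) ℂ) (hS : S.PosDef)
    (R : Matrix (Fin t ⊕ Fin r) (Fin t ⊕ Fin r) ℂ) (hR : R.PosDef) (hRS : R * R = S⁻¹)
    (z : Fin t ⊕ Fin r → ℂ) :
    star z ⬝ᵥ ((R * (1 - proj (R * Et t r)) * R) *ᵥ z) =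
      star (fun i => z (Sum.inr i)) ⬝ᵥ
        ((S.submatrix Sum.inr Sum.inr)⁻¹ *ᵥ fun i => z (Sum.inr i)) := by
  classical
  have hT : (S⁻¹).PosDef := hS.inv
  set T11 := (S⁻¹).toBlocks₁₁ with hT11def
  set T12 := (S⁻¹).toBlocks₁₂ with hT12def
  set T21 := (S⁻¹).toBlocks₂₁ with hT21def
  set T22 := (S⁻¹).toBlocks₂₂ with hT22def
  set S11 := S.toBlocks₁₁ with hS11def
  set S12 := S.toBlocks₁₂ with hS12def
  set S21 := S.toBlocks₂₁ with hS21def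
  set S22 := S.toBlocks₂₂ with hS22def
  have hT11 : T11.PosDef := posDef_blk₁₁ hT
  have hS22 : S22.PosDef := posDef_blk₂₂ hS
  have hSsub : S.submatrix Sum.inr Sum.inr = S22 := rfl
  -- E as fromRows
  have hE : Et t r = fromRows (1 : Matrix (Fin t) (Fin t) ℂ) (0 : Matrix (Fin r) (Fin t) ℂ) := by
    ext i j
    cases i <;> simp [Et, Matrix.one_apply, Sum.inl.injEq]
  have hEH : (Et t r)ᴴ = fromCols (1 : Matrix (Fin t) (Fin t) ℂ) (0 : Matrix (Fin t) (Fin r) ℂ) := by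
    rw [hE, conjTranspose_fromRows_eq_fromCols_conjTranspose]
    simp
  have hTblocks : S⁻¹ = fromBlocks T11 T12 T21 T22 := (fromBlocks_toBlocks _).symm
  have hSblocks : S = fromBlocks S11 S12 S21 S22 := (fromBlocks_toBlocks _).symm
  -- products with E
  have hTE : S⁻¹ * Et t r = fromRows T11 T21 := by
    rw [hE, hTblocks, fromBlocks_mul_fromRows]; simp
  have hET : (Et t r)ᴴ * S⁻¹ = fromCols T11 T12 := by
    rw [hEH, hTblocks, fromCols_mul_fromBlocks]; simp
  -- Gram matrix
  have hRH : Rᴴ = R := hR.isHermitian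
  have hA : (R * Et t r)ᴴ * (R * Et t r) = T11 := by
    rw [conjTranspose_mul, hRH, Matrix.mul_assoc, ← Matrix.mul_assoc R, hRS,
      ← Matrix.mul_assoc, hET, hE, fromCols_mul_fromRows]
    simp
  -- invertibility facts
  have hT11inv : T11 * T11⁻¹ = 1 := mul_nonsing_inv _ hT11.det_pos.ne'.isUnit
  have hT11inv' : T11⁻¹ * T11 = 1 := nonsing_inv_mul _ hT11.det_pos.ne'.isUnit
  -- the key matrix identity
  have hM : R * (1 - proj (R * Et t r)) * R
      = fromBlocks 0 0 0 (T22 - T21 * T11⁻¹ * T12) := by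
    rw [proj, hA]
    have expand : R * (1 - R * Et t r * T11⁻¹ * (R * Et t r)ᴴ) * R
        = S⁻¹ - (S⁻¹ * Et t r) * T11⁻¹ * ((Et t r)ᴴ * S⁻¹) := by
      rw [conjTranspose_mul, hRH]
      rw [Matrix.mul_sub, Matrix.sub_mul, Matrix.mul_one]
      rw [hRS]
      congr 1
      rw [← hRS]
      simp only [Matrix.mul_assoc]
    have cancel : ∀ (X : Matrix (Fin t) (Fin r) ℂ), T11 * (T11⁻¹ * X) = X := fun X => by
      rw [← Matrix.mul_assoc, hT11inv, Matrix.one_mul]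
    rw [expand, hTE, hET]
    rw [fromRows_mul, fromRows_mul_fromCols, hTblocks]
    simp only [Matrix.mul_assoc, hT11inv', Matrix.mul_one, cancel]
    ext (i|i) (j|j) <;>
      simp [fromBlocks_apply₁₁, fromBlocks_apply₁₂, fromBlocks_apply₂₁, fromBlocks_apply₂₂]
  -- Schur complement: T22 - T21 T11⁻¹ T12 = S22⁻¹
  have hST : S * S⁻¹ = 1 := mul_nonsing_inv _ hS.det_pos.ne'.isUnit
  have hblocksmul : fromBlocks (S11*T11 + S12*T21) (S11*T12 + S12*T22)
      (S21*T11 + S22*T21) (S21*T12 + S22*T22)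
      = fromBlocks (1 : Matrix (Fin t) (Fin t) ℂ) 0 0 (1 : Matrix (Fin r) (Fin r) ℂ) := by
    rw [← fromBlocks_multiply, ← hSblocks, ← hTblocks, hST, fromBlocks_one]
  have h21 : S21*T11 + S22*T21 = 0 := by
    have := congrArg Matrix.toBlocks₂₁ hblocksmul
    simpa only [toBlocks_fromBlocks₂₁] using this
  have h22 : S21*T12 + S22*T22 = 1 := by
    have := congrArg Matrix.toBlocks₂₂ hblocksmul
    simpa only [toBlocks_fromBlocks₂₂] using this
  have hSchur : (S22)⁻¹ = T22 - T21 * T11⁻¹ * T12 := by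
    apply inv_eq_right_inv
    have hS22T21 : S22 * T21 = -(S21 * T11) := by
      rw [eq_neg_iff_add_eq_zero]; rw [add_comm]; exact h21
    calc S22 * (T22 - T21 * T11⁻¹ * T12)
        = S22 * T22 - S22 * T21 * (T11⁻¹ * T12) := by
          rw [Matrix.mul_sub]; simp only [Matrix.mul_assoc]
      _ = S22 * T22 + S21 * (T11 * T11⁻¹) * T12 := by
          rw [hS22T21]; simp only [Matrix.neg_mul, sub_neg_eq_add, Matrix.mul_assoc]
      _ = S21 * T12 + S22 * T22 := by rw [hT11inv]; simp [add_comm]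
      _ = 1 := h22
  rw [hM, hSsub, hSchur]
  -- final dot product computation
  have hz : z = Sum.elim (fun i => z (Sum.inl i)) (fun i => z (Sum.inr i)) := by
    ext (i|i) <;> rfl
  rw [hz, fromBlocks_mulVec, Matrix.dotProduct_block]
  simp
  rfl
end
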